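/- (Pohozaev identity) Let $a_1,a_2>0$ and let $u_1,u_2$ be twice continuously differentiable real functions on an open interval $I\subseteq(0,\infty)$ which satisfy the radial system $u_1''(r)+\frac{1}{r}u_1'(r)=(1+a_1)F_1(r)-a_1F_2(r)$, $u_2''(r)+\frac{1}{r}u_2'(r)=(1+a_2)F_2(r)-a_2F_1(r)$ on $I$, where $F_k(r)=(1+a_k)e^{2u_k(r)}-e^{u_k(r)}-a_k e^{u_1(r)+u_2(r)}$ for $k=1,2$. Then for every $r\in I$, $\frac{d}{dr}\Big\{J(ru_1'(r)+2,\,ru_2'(r)+2)+(1+a_1+a_2)r^2\Big[a_2e^{u_1}+a_1e^{u_2}-\frac{a_2(1+a_1)}{2}e^{2u_1}-\frac{a_1(1+a_2)}{2}e^{2u_2}+a_1a_2e^{u_1+u_2}\Big]\Big\}=(1+a_1+a_2)r\left[a_2(1+a_1)e^{2u_1}+a_1(1+a_2)e^{2u_2}-2a_1a_2e^{u_1+u_2}\right]$. -/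

import Mathlib

open Real Set

/-- The quadratic form `J(x,y) = a₂(1+a₂)/2 x² + a₁a₂ xy + a₁(1+a₁)/2 y²`. -/
noncomputable def Jform (a₁ a₂ x y : ℝ) : ℝ :=
  a₂ * (1 + a₂) / 2 * x ^ 2 + a₁ * a₂ * x * y + a₁ * (1 + a₁) / 2 * y ^ 2

/-- Pohozaev identity. -/
theorem pohozaev_identity (a₁ a₂ : ℝ) (ha₁ : 0 < a₁) (ha₂ : 0 < a₂)
    (I : Set ℝ) (hIopen : IsOpen I) (hIconn : I.OrdConnected) (hIsub : I ⊆ Ioi 0)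
    (u₁ u₂ : ℝ → ℝ)
    (hu₁ : ContDiffOn ℝ 2 u₁ I) (hu₂ : ContDiffOn ℝ 2 u₂ I)
    (F₁ F₂ : ℝ → ℝ)
    (hF₁ : ∀ r, F₁ r = (1 + a₁) * exp (2 * u₁ r) - exp (u₁ r) - a₁ * exp (u₁ r + u₂ r))
    (hF₂ : ∀ r, F₂ r = (1 + a₂) * exp (2 * u₂ r) - exp (u₂ r) - a₂ * exp (u₁ r + u₂ r))
    (hode₁ : ∀ r ∈ I, deriv (deriv u₁) r + (1 / r) * deriv u₁ r
        = (1 + a₁) * F₁ r - a₁ * F₂ r)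
    (hode₂ : ∀ r ∈ I, deriv (deriv u₂) r + (1 / r) * deriv u₂ r
        = (1 + a₂) * F₂ r - a₂ * F₁ r) :
    ∀ r ∈ I,
      HasDerivAt (fun t => Jform a₁ a₂ (t * deriv u₁ t + 2) (t * deriv u₂ t + 2)
          + (1 + a₁ + a₂) * t ^ 2 *
            (a₂ * exp (u₁ t) + a₁ * exp (u₂ t)
              - a₂ * (1 + a₁) / 2 * exp (2 * u₁ t)
              - a₁ * (1 + a₂) / 2 * exp (2 * u₂ t)
              + a₁ * a₂ * exp (u₁ t + u₂ t)))
        ((1 + a₁ + a₂) * r *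
          (a₂ * (1 + a₁) * exp (2 * u₁ r) + a₁ * (1 + a₂) * exp (2 * u₂ r)
            - 2 * a₁ * a₂ * exp (u₁ r + u₂ r))) r := by
  intro r hr
  have hrpos : (0:ℝ) < r := hIsub hr
  have hr0 : r ≠ 0 := ne_of_gt hrpos
  have hmem : I ∈ nhds r := hIopen.mem_nhds hr
  -- first and second derivatives
  have h1 : HasDerivAt u₁ (deriv u₁ r) r :=
    ((hu₁.contDiffAt hmem).differentiableAt (by norm_num)).hasDerivAt
  have h2 : HasDerivAt u₂ (deriv u₂ r) r :=
    ((hu₂.contDiffAt hmem).differentiableAt (by norm_num)).hasDerivAt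
  have h1' : HasDerivAt (deriv u₁) (deriv (deriv u₁) r) r :=
    (((hu₁.deriv_of_isOpen (m:=1) hIopen (by norm_num)).contDiffAt hmem).differentiableAt
      (by norm_num)).hasDerivAt
  have h2' : HasDerivAt (deriv u₂) (deriv (deriv u₂) r) r :=
    (((hu₂.deriv_of_isOpen (m:=1) hIopen (by norm_num)).contDiffAt hmem).differentiableAt
      (by norm_num)).hasDerivAt
  set p := deriv u₁ r
  set q := deriv u₂ r
  set P := deriv (deriv u₁) r
  set Q := deriv (deriv u₂) r
  -- building blocks
  have hf : HasDerivAt (fun t => t * deriv u₁ t + 2) (1 * p + r * P) r :=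
    ((hasDerivAt_id r).mul h1').add_const 2
  have hg : HasDerivAt (fun t => t * deriv u₂ t + 2) (1 * q + r * Q) r :=
    ((hasDerivAt_id r).mul h2').add_const 2
  have he1 : HasDerivAt (fun t => exp (u₁ t)) (exp (u₁ r) * p) r := h1.exp
  have he2 : HasDerivAt (fun t => exp (u₂ t)) (exp (u₂ r) * q) r := h2.exp
  have he11 : HasDerivAt (fun t => exp (2 * u₁ t)) (exp (2 * u₁ r) * (2 * p)) r :=
    (h1.const_mul 2).exp
  have he22 : HasDerivAt (fun t => exp (2 * u₂ t)) (exp (2 * u₂ r) * (2 * q)) r :=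
    (h2.const_mul 2).exp
  have he12 : HasDerivAt (fun t => exp (u₁ t + u₂ t)) (exp (u₁ r + u₂ r) * (p + q)) r :=
    (h1.add h2).exp
  -- Jform part
  have hJ := (((hf.pow 2).const_mul (a₂ * (1 + a₂) / 2)).add
      ((hf.const_mul (a₁ * a₂)).mul hg)).add ((hg.pow 2).const_mul (a₁ * (1 + a₁) / 2))
  -- exponential part
  have hE : HasDerivAt (fun t => a₂ * exp (u₁ t) + a₁ * exp (u₂ t)
        - a₂ * (1 + a₁) / 2 * exp (2 * u₁ t) - a₁ * (1 + a₂) / 2 * exp (2 * u₂ t)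
        + a₁ * a₂ * exp (u₁ t + u₂ t))
      (a₂ * (exp (u₁ r) * p) + a₁ * (exp (u₂ r) * q)
        - a₂ * (1 + a₁) / 2 * (exp (2 * u₁ r) * (2 * p))
        - a₁ * (1 + a₂) / 2 * (exp (2 * u₂ r) * (2 * q))
        + a₁ * a₂ * (exp (u₁ r + u₂ r) * (p + q))) r :=
    ((((he1.const_mul a₂).add (he2.const_mul a₁)).sub
      (he11.const_mul _)).sub (he22.const_mul _)).add (he12.const_mul _)
  have hr2 : HasDerivAt (fun t : ℝ => (1 + a₁ + a₂) * t ^ 2)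
      ((1 + a₁ + a₂) * ((2:ℕ) * r ^ 1)) r := (hasDerivAt_pow 2 r).const_mul _
  have hbig := hJ.add (hr2.mul hE)
  have hP : P = (1 + a₁) * F₁ r - a₁ * F₂ r - (1 / r) * p := by
    have := hode₁ r hr; linarith
  have hQ : Q = (1 + a₂) * F₂ r - a₂ * F₁ r - (1 / r) * q := by
    have := hode₂ r hr; linarith
  convert hbig using 1
  · rfl
  · rfl
  · rfl
  rw [hP, hQ, hF₁, hF₂]
  field_simp
  ring
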